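/- Fix a C-sequence. Let α ≤ γ ≤ β < ω₁ and suppose that L(α,γ) ≠ ∅ and that every element of L(γ,β) is strictly smaller than min L(α,γ). Then L(α,β) = L(α,γ) ∪ L(γ,β). -/

import Mathlib

noncomputable section

open Set Ordinal

/-- The first uncountable ordinal. -/
def omega1 : Ordinal := (Cardinal.aleph 1).ord

/-- `C` is a C-sequence: `C 0 = ∅`, `C (α+1) = {α}`, and for every limit `α < ω₁`,
`C α` is a cofinal subset of `α` meeting every initial segment in a finite set. -/
def IsCSeq (C : Ordinal → Set Ordinal) : Prop :=
  C 0 = ∅ ∧ (∀ α, C (α + 1) = {α}) ∧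
  ∀ α, α < omega1 → Order.IsSuccLimit α →
    (∀ ξ ∈ C α, ξ < α) ∧ (∀ ξ < α, ∃ η ∈ C α, ξ ≤ η) ∧ ∀ ξ < α, (C α ∩ Iio ξ).Finite

/-- `min (C β \ α)`. -/
def minAbove (C : Ordinal → Set Ordinal) (α β : Ordinal) : Ordinal :=
  sInf {ξ ∈ C β | α ≤ ξ}

/-- `max (C β ∩ α)`. -/
def maxBelow (C : Ordinal → Set Ordinal) (α β : Ordinal) : Ordinal :=
  sSup (C β ∩ Iio α)

/-- `U` is the upper trace function of the C-sequence `C`: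
`U(α,α) = ∅` and `U(α,β) = U(α, min (C β \ α)) ∪ {β}` for `α < β`. -/
def UpperSpec (C : Ordinal → Set Ordinal) (U : Ordinal → Ordinal → Set Ordinal) : Prop :=
  (∀ α, U α α = ∅) ∧ ∀ α β, α < β → U α β = U α (minAbove C α β) ∪ {β}

/-- `L` is the lower trace function of the C-sequence `C`: `L(α,α) = ∅`,
`L(α,β) = L(α, min (C β \ α))` when `C β ∩ α = ∅`, and otherwise
`L(α,β) = {ζ ∈ L(α, min (C β \ α)) ∪ {max (C β ∩ α)} : ζ ≥ max (C β ∩ α)}`. -/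
def LowerSpec (C : Ordinal → Set Ordinal) (L : Ordinal → Ordinal → Set Ordinal) : Prop :=
  (∀ α, L α α = ∅) ∧
  (∀ α β, α < β → C β ∩ Iio α = ∅ → L α β = L α (minAbove C α β)) ∧
  ∀ α β, α < β → (C β ∩ Iio α).Nonempty →
    L α β = {ζ ∈ L α (minAbove C α β) ∪ {maxBelow C α β} | maxBelow C α β ≤ ζ}

lemma minAbove_spec (C : Ordinal → Set Ordinal) (hC : IsCSeq C) {δ β : Ordinal}
    (h : δ < β) (hβ : β < omega1) :
    minAbove C δ β ∈ C β ∧ δ ≤ minAbove C δ β ∧ minAbove C δ β < β := by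
  rcases Ordinal.zero_or_succ_or_isSuccLimit β with h0 | ⟨b, hb⟩ | hlim
  · subst h0; exact absurd h (not_lt_zero (a := δ))
  · subst hb
    have hCb : C (Order.succ b) = {b} := by
      rw [← Ordinal.add_one_eq_succ]; exact hC.2.1 b
    have hδb : δ ≤ b := Order.lt_succ_iff.mp h
    have hset : {ξ ∈ C (Order.succ b) | δ ≤ ξ} = {b} := by
      rw [hCb]; ext ξ
      simp only [Set.mem_setOf_eq, Set.mem_singleton_iff]
      constructor
      · rintro ⟨rfl, _⟩; rfl
      · rintro rfl; exact ⟨rfl, hδb⟩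
    unfold minAbove
    rw [hset, csInf_singleton, hCb]
    exact ⟨rfl, hδb, Order.lt_succ b⟩
  · obtain ⟨h1, h2, _⟩ := hC.2.2 β hβ hlim
    obtain ⟨η, hη, hδη⟩ := h2 δ h
    have hS : {ξ ∈ C β | δ ≤ ξ}.Nonempty := ⟨η, hη, hδη⟩
    have hmem := csInf_mem hS
    exact ⟨hmem.1, hmem.2, h1 _ hmem.1⟩

lemma C_inter_finite (C : Ordinal → Set Ordinal) (hC : IsCSeq C) {δ β : Ordinal}
    (h : δ < β) (hβ : β < omega1) : (C β ∩ Iio δ).Finite := by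
  rcases Ordinal.zero_or_succ_or_isSuccLimit β with h0 | ⟨b, hb⟩ | hlim
  · subst h0; exact absurd h (not_lt_zero (a := δ))
  · subst hb
    have hCb : C (Order.succ b) = {b} := by
      rw [← Ordinal.add_one_eq_succ]; exact hC.2.1 b
    exact Set.Finite.inter_of_left (hCb ▸ Set.finite_singleton b) _
  · exact (hC.2.2 β hβ hlim).2.2 δ h

lemma maxBelow_mem (C : Ordinal → Set Ordinal) (hC : IsCSeq C) {δ β : Ordinal}
    (h : δ < β) (hβ : β < omega1) (hne : (C β ∩ Iio δ).Nonempty) :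
    maxBelow C δ β ∈ C β ∩ Iio δ :=
  hne.csSup_mem (C_inter_finite C hC h hβ)

lemma L_lt (C : Ordinal → Set Ordinal) (hC : IsCSeq C)
    (L : Ordinal → Ordinal → Set Ordinal) (hL : LowerSpec C L) (α : Ordinal) :
    ∀ δ, α ≤ δ → δ < omega1 → ∀ ζ ∈ L α δ, ζ < α := by
  intro δ
  induction δ using Ordinal.induction with
  | h δ IH =>
    intro hαδ hδ ζ hζ
    rcases eq_or_lt_of_le hαδ with h | h
    · rw [← h, hL.1] at hζ; exact absurd hζ (Set.notMem_empty ζ)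
    · obtain ⟨_, hle, hlt⟩ := minAbove_spec C hC h hδ
      by_cases hc : C δ ∩ Iio α = ∅
      · rw [hL.2.1 α δ h hc] at hζ
        exact IH _ hlt hle (hlt.trans hδ) ζ hζ
      · have hc' : (C δ ∩ Iio α).Nonempty := Set.nonempty_iff_ne_empty.mpr hc
        rw [hL.2.2 α δ h hc'] at hζ
        obtain ⟨h1 | h2, _⟩ := hζ
        · exact IH _ hlt hle (hlt.trans hδ) ζ h1
        · rw [Set.mem_singleton_iff] at h2
          rw [h2]
          exact (maxBelow_mem C hC h hδ hc').2

set_option maxHeartbeats 800000 in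
/-- If `α ≤ γ ≤ β < ω₁`, `L(α,γ) ≠ ∅` and every element of `L(γ,β)` is strictly below
`min L(α,γ)`, then `L(α,β) = L(α,γ) ∪ L(γ,β)`. -/
theorem stmt3 (C : Ordinal → Set Ordinal) (hC : IsCSeq C)
    (L : Ordinal → Ordinal → Set Ordinal) (hL : LowerSpec C L)
    (α γ β : Ordinal) (hαγ : α ≤ γ) (hγβ : γ ≤ β) (hβ : β < omega1)
    (hne : L α γ ≠ ∅) (hlt : ∀ ζ ∈ L γ β, ζ < sInf (L α γ)) :
    L α β = L α γ ∪ L γ β := by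
  have hne' : (L α γ).Nonempty := Set.nonempty_iff_ne_empty.mpr hne
  have hαγ' : α < γ := by
    rcases lt_or_eq_of_le hαγ with h | h
    · exact h
    · exact absurd (h ▸ hL.1 α) hne
  have hγω : γ < omega1 := lt_of_le_of_lt hγβ hβ
  have hInfmem : sInf (L α γ) ∈ L α γ := csInf_mem hne'
  have hInflt : sInf (L α γ) < α := L_lt C hC L hL α γ hαγ'.le hγω _ hInfmem
  have key : ∀ b, γ ≤ b → b < omega1 → (∀ ζ ∈ L γ b, ζ < sInf (L α γ)) →
      L α b = L α γ ∪ L γ b := by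
    intro b
    induction b using Ordinal.induction with
    | h b IH =>
      intro h1 h2 h3
      rcases eq_or_lt_of_le h1 with hbγ | hγb
      · rw [← hbγ, hL.1]; simp
      · have hαb : α < b := hαγ'.trans_le h1
        obtain ⟨hβ'mem, hβ'ge, hβ'lt⟩ := minAbove_spec C hC hγb h2
        have hβ'ω : minAbove C γ b < omega1 := hβ'lt.trans h2
        by_cases hCγ : C b ∩ Iio γ = ∅
        · have hCα : C b ∩ Iio α = ∅ := by
            rw [Set.eq_empty_iff_forall_notMem] at hCγ ⊢
            intro x hx
            exact hCγ x ⟨hx.1, lt_of_lt_of_le hx.2 hαγ⟩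
          have hmin : minAbove C α b = minAbove C γ b := by
            unfold minAbove
            congr 1
            ext ξ
            simp only [Set.mem_setOf_eq]
            constructor
            · rintro ⟨hξ, _⟩
              refine ⟨hξ, ?_⟩
              by_contra hcon
              exact (Set.eq_empty_iff_forall_notMem.mp hCγ) ξ ⟨hξ, not_le.mp hcon⟩
            · rintro ⟨hξ, hξ2⟩; exact ⟨hξ, hαγ.trans hξ2⟩
          rw [hL.2.1 α b hαb hCα, hmin, hL.2.1 γ b hγb hCγ]
          rw [hL.2.1 γ b hγb hCγ] at h3
          exact IH _ hβ'lt hβ'ge hβ'ω h3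
        · have hCne : (C b ∩ Iio γ).Nonempty := Set.nonempty_iff_ne_empty.mpr hCγ
          set μ := maxBelow C γ b with hμdef
          have hμmem : μ ∈ C b ∩ Iio γ := maxBelow_mem C hC hγb h2 hCne
          have hμL : μ ∈ L γ b := by
            rw [hL.2.2 γ b hγb hCne]
            exact ⟨Or.inr rfl, le_rfl⟩
          have hμInf : μ < sInf (L α γ) := h3 μ hμL
          have hμα : μ < α := hμInf.trans hInflt
          have hbdd : BddAbove (C b ∩ Iio γ) :=
            (C_inter_finite C hC hγb h2).bddAbove
          have hsets : C b ∩ Iio γ = C b ∩ Iio α := by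
            ext ξ
            constructor
            · rintro ⟨hξ1, hξ2⟩
              exact ⟨hξ1, lt_of_le_of_lt (le_csSup hbdd ⟨hξ1, hξ2⟩) hμα⟩
            · rintro ⟨hξ1, hξ2⟩
              exact ⟨hξ1, lt_of_lt_of_le hξ2 hαγ⟩
          have hCαne : (C b ∩ Iio α).Nonempty := hsets ▸ hCne
          have hmaxeq : maxBelow C α b = μ := by
            rw [hμdef]; unfold maxBelow; rw [← hsets]
          have hmineq : minAbove C α b = minAbove C γ b := by
            unfold minAbove
            congr 1
            ext ξ
            simp only [Set.mem_setOf_eq]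
            constructor
            · rintro ⟨hξ, hξ2⟩
              refine ⟨hξ, ?_⟩
              by_contra hcon
              have : ξ ≤ μ := le_csSup hbdd ⟨hξ, not_le.mp hcon⟩
              exact absurd hξ2 (not_le.mpr (lt_of_le_of_lt this hμα))
            · rintro ⟨hξ, hξ2⟩; exact ⟨hξ, hαγ.trans hξ2⟩
          have hlt' : ∀ ζ ∈ L γ (minAbove C γ b), ζ < sInf (L α γ) := by
            intro ζ hζ
            by_cases hζμ : μ ≤ ζ
            · apply h3
              rw [hL.2.2 γ b hγb hCne]
              exact ⟨Or.inl hζ, hζμ⟩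
            · exact (not_le.mp hζμ).trans hμInf
          have hIH : L α (minAbove C γ b) = L α γ ∪ L γ (minAbove C γ b) :=
            IH _ hβ'lt hβ'ge hβ'ω hlt'
          rw [hL.2.2 α b hαb hCαne, hL.2.2 γ b hγb hCne, hmaxeq, hmineq, hIH]
          rw [← hμdef]
          ext ζ
          simp only [Set.mem_setOf_eq, Set.mem_union, Set.mem_singleton_iff]
          constructor
          · rintro ⟨(h | h) | h, hμζ⟩
            · exact Or.inl h
            · exact Or.inr ⟨Or.inl h, hμζ⟩
            · exact Or.inr ⟨Or.inr h, hμζ⟩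
          · rintro (h | ⟨h, hμζ⟩)
            · have hζinf : sInf (L α γ) ≤ ζ := csInf_le (OrderBot.bddBelow _) h
              exact ⟨Or.inl (Or.inl h), (hμInf.trans_le hζinf).le⟩
            · exact ⟨h.imp (fun x => Or.inr x) id, hμζ⟩
  exact key β hγβ hβ hlt
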